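/- A finite full binary tree is quasi-balanced if and only if it is monotone, i.e., every subtree S (with immediate subtrees S0, S1) satisfies E_S ≥ max(E_{S0}, E_{S1}). -/

import Mathlib

/-- Finite full rooted ordered binary trees with internal nodes labeled by `X`. -/
inductive BTree (X : Type) : Type
  | leaf : BTree X
  | node : X → BTree X → BTree X → BTree X

namespace BTree

variable {X : Type}

/-- The branches (root-to-leaf paths) of a tree, each recorded as the list of
edge labels (`false` = left/0, `true` = right/1) along the path. -/
def branches : BTree X → List (List Bool)
  | leaf => [[]]
  | node _ l r => (branches l).map (List.cons false) ++ (branches r).map (List.cons true)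

/-- The expected length of a uniformly random branch:
`E T = ∑_{b ∈ B(T)} |b| · 2^{-|b|}`. -/
noncomputable def E (t : BTree X) : ℝ :=
  ((branches t).map (fun b => (b.length : ℝ) * (2 : ℝ) ^ (-(b.length : ℤ)))).sum

/-- The internal-node positions of the tree, as paths from the root. -/
def nodePaths : BTree X → List (List Bool)
  | leaf => []
  | node _ l r =>
      [] :: ((nodePaths l).map (List.cons false) ++ (nodePaths r).map (List.cons true))

/-- `w` is a weight function for `t`: at every internal node, the two outgoing
edges get nonnegative weights summing to `1`. -/
def IsWeightFn (t : BTree X) (w : List Bool → Bool → ℝ) : Prop :=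
  ∀ p ∈ nodePaths t, 0 ≤ w p false ∧ 0 ≤ w p true ∧ w p false + w p true = 1

/-- The total weight of a branch `b`: the sum of the weights of its edges. -/
def branchWeight (w : List Bool → Bool → ℝ) (b : List Bool) : ℝ :=
  ((List.range b.length).map (fun i => w (b.take i) (b.getD i false))).sum

/-- The subtree of `t` rooted at the end of the path `p` (junk value `leaf`
if the path leaves the tree). -/
def subtreeAt : BTree X → List Bool → BTree X
  | t, [] => t
  | leaf, _ :: _ => leaf
  | node _ l r, d :: p => subtreeAt (if d then r else l) p

/-- A tree is quasi-balanced if some weight function gives all branches the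
same total weight `E T / 2`. -/
def QuasiBalanced (t : BTree X) : Prop :=
  ∃ w : List Bool → Bool → ℝ, IsWeightFn t w ∧ ∀ b ∈ branches t, branchWeight w b = E t / 2

/-- A tree is monotone if every subtree's expected branch length is at least
that of each of its immediate subtrees. -/
def IsMonotone : BTree X → Prop
  | leaf => True
  | node x l r =>
      E l ≤ E (node x l r) ∧ E r ≤ E (node x l r) ∧ IsMonotone l ∧ IsMonotone r

/-- The minimum length of a branch of the tree. -/
def minBranch : BTree X → ℕ
  | leaf => 0
  | node _ l r => 1 + min (minBranch l) (minBranch r)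

/-- The sequence of labeled examples along the path `p`: at a node labeled `x`,
following the edge labeled `d` produces the example `(x, d)`. -/
def examplesAlong : BTree X → List Bool → List (X × Bool)
  | leaf, _ => []
  | node _ _ _, [] => []
  | node x l r, d :: p => (x, d) :: examplesAlong (if d then r else l) p

end BTree

namespace BTree
variable {X : Type}

lemma branchWeight_nil (w : List Bool → Bool → ℝ) : branchWeight w [] = 0 := by
  simp [branchWeight]

lemma branchWeight_cons (w : List Bool → Bool → ℝ) (d : Bool) (b : List Bool) :
    branchWeight w (d :: b) = w [] d + branchWeight (fun p e => w (d :: p) e) b := by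
  simp only [branchWeight, List.length_cons, List.range_succ_eq_map, List.map_cons,
    List.map_map, List.sum_cons, List.take_zero, List.getD_cons_zero]
  congr 1

lemma two_zpow_neg_succ (n : ℤ) : (2:ℝ) ^ (-(n+1)) = (2:ℝ) ^ (-n) / 2 := by
  have h : -(n+1) = -n - 1 := by ring
  rw [h, zpow_sub_one₀ (two_ne_zero)]
  ring

noncomputable def K (t : BTree X) : ℝ :=
  ((branches t).map (fun b => (2:ℝ) ^ (-(b.length : ℤ)))).sum

lemma K_shift (d : Bool) (L : List (List Bool)) :
    (((L.map (List.cons d)).map (fun b => (2:ℝ) ^ (-(b.length : ℤ)))).sum)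
      = (L.map (fun b => (2:ℝ) ^ (-(b.length : ℤ)))).sum / 2 := by
  induction L with
  | nil => simp
  | cons a L ih =>
    simp only [List.map_cons, List.sum_cons, ih, List.length_cons]
    push_cast
    rw [two_zpow_neg_succ]
    ring

lemma K_eq_one : ∀ t : BTree X, K t = 1
  | leaf => by simp [K, branches]
  | node x l r => by
    have hl := K_eq_one l
    have hr := K_eq_one r
    simp only [K, branches, List.map_append, List.sum_append] at *
    rw [K_shift, K_shift, hl, hr]
    norm_num

lemma E_shift (d : Bool) (L : List (List Bool)) :
    (((L.map (List.cons d)).map (fun b => (b.length : ℝ) * (2:ℝ) ^ (-(b.length : ℤ)))).sum)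
      = ((L.map (fun b => (b.length : ℝ) * (2:ℝ) ^ (-(b.length : ℤ)))).sum
          + (L.map (fun b => (2:ℝ) ^ (-(b.length : ℤ)))).sum) / 2 := by
  induction L with
  | nil => simp
  | cons a L ih =>
    simp only [List.map_cons, List.sum_cons, ih, List.length_cons]
    push_cast
    rw [two_zpow_neg_succ]
    ring

lemma E_node (x : X) (l r : BTree X) :
    E (node x l r) = 1 + (E l + E r) / 2 := by
  have hl := K_eq_one l
  have hr := K_eq_one r
  simp only [K] at hl hr
  simp only [E, branches, List.map_append, List.sum_append]
  rw [E_shift, E_shift, hl, hr]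
  ring

lemma E_leaf : E (leaf : BTree X) = 0 := by simp [E, branches]

lemma weightFn_left {x : X} {l r : BTree X} {w : List Bool → Bool → ℝ}
    (hw : IsWeightFn (node x l r) w) : IsWeightFn l (fun p e => w (false :: p) e) := by
  intro p hp
  exact hw (false :: p) (by
    simp only [nodePaths, List.mem_cons, List.mem_append, List.mem_map]
    exact Or.inr (Or.inl ⟨p, hp, rfl⟩))

lemma weightFn_right {x : X} {l r : BTree X} {w : List Bool → Bool → ℝ}
    (hw : IsWeightFn (node x l r) w) : IsWeightFn r (fun p e => w (true :: p) e) := by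
  intro p hp
  exact hw (true :: p) (by
    simp only [nodePaths, List.mem_cons, List.mem_append, List.mem_map]
    exact Or.inr (Or.inr ⟨p, hp, rfl⟩))

/-- Expected branch weight: for any weight function, the Kraft-weighted sum of
branch weights equals `E t / 2`. -/
lemma sum_branchWeight : ∀ (t : BTree X) (w : List Bool → Bool → ℝ), IsWeightFn t w →
    ((branches t).map (fun b => (2:ℝ) ^ (-(b.length : ℤ)) * branchWeight w b)).sum = E t / 2
  | leaf, w, _ => by simp [branches, branchWeight_nil, E_leaf]
  | node x l r, w, hw => by
    have hroot := hw [] (by simp [nodePaths])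
    have ihl := sum_branchWeight l _ (weightFn_left hw)
    have ihr := sum_branchWeight r _ (weightFn_right hw)
    have kl := K_eq_one l
    have kr := K_eq_one r
    simp only [K] at kl kr
    have key : ∀ (d : Bool) (L : List (List Bool)) (c : ℝ) (f : List Bool → ℝ),
        (∀ b ∈ L, branchWeight w (d :: b) = c + f b) →
        (((L.map (List.cons d)).map (fun b => (2:ℝ) ^ (-(b.length : ℤ)) * branchWeight w b)).sum)
          = (c * (L.map (fun b => (2:ℝ) ^ (-(b.length : ℤ)))).sum
              + (L.map (fun b => (2:ℝ) ^ (-(b.length : ℤ)) * f b)).sum) / 2 := by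
      intro d L c f h
      induction L with
      | nil => simp
      | cons a L ih =>
        simp only [List.map_cons, List.sum_cons, List.length_cons,
          ih (fun b hb => h b (List.mem_cons_of_mem a hb)), h a List.mem_cons_self]
        push_cast
        rw [two_zpow_neg_succ]
        ring
    simp only [branches, List.map_append, List.sum_append]
    rw [key false (branches l) (w [] false) _ (fun b _ => branchWeight_cons w false b),
        key true (branches r) (w [] true) _ (fun b _ => branchWeight_cons w true b),
        kl, kr, ihl, ihr, E_node]
    have := hroot.2.2
    linarith

def combine (a b : ℝ) (wl wr : List Bool → Bool → ℝ) : List Bool → Bool → ℝ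
  | [], d => if d then b else a
  | false :: q, d => wl q d
  | true :: q, d => wr q d

lemma main : ∀ t : BTree X, QuasiBalanced t ↔ IsMonotone t
  | leaf => by
    constructor
    · intro _; trivial
    · intro _
      refine ⟨fun _ _ => 1/2, ?_, ?_⟩
      · intro p hp; simp [nodePaths] at hp
      · intro b hb
        simp only [branches, List.mem_singleton] at hb
        subst hb
        simp [branchWeight_nil, E_leaf]
  | node x l r => by
    have ihl := main l
    have ihr := main r
    constructor
    · rintro ⟨w, hw, hb⟩
      have hroot := hw [] (by simp [nodePaths])
      have hQl : ∀ b ∈ branches l, branchWeight (fun p e => w (false :: p) e) b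
          = E (node x l r) / 2 - w [] false := by
        intro b hbmem
        have := hb (false :: b) (by
          simp only [branches, List.mem_append, List.mem_map]
          exact Or.inl ⟨b, hbmem, rfl⟩)
        rw [branchWeight_cons] at this
        linarith
      have hQr : ∀ b ∈ branches r, branchWeight (fun p e => w (true :: p) e) b
          = E (node x l r) / 2 - w [] true := by
        intro b hbmem
        have := hb (true :: b) (by
          simp only [branches, List.mem_append, List.mem_map]
          exact Or.inr ⟨b, hbmem, rfl⟩)
        rw [branchWeight_cons] at this
        linarith
      have kl := K_eq_one l
      have kr := K_eq_one r
      simp only [K] at kl kr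
      have sl := sum_branchWeight l _ (weightFn_left hw)
      have sr := sum_branchWeight r _ (weightFn_right hw)
      have cl : E (node x l r) / 2 - w [] false = E l / 2 := by
        rw [List.map_congr_left (fun b hbm => by rw [hQl b hbm])] at sl
        rw [List.sum_map_mul_right, kl, one_mul] at sl
        linarith
      have cr : E (node x l r) / 2 - w [] true = E r / 2 := by
        rw [List.map_congr_left (fun b hbm => by rw [hQr b hbm])] at sr
        rw [List.sum_map_mul_right, kr, one_mul] at sr
        linarith
      refine ⟨by linarith [hroot.1], by linarith [hroot.2.1], ?_, ?_⟩
      · exact ihl.mp ⟨_, weightFn_left hw, fun b hbm => by rw [hQl b hbm, cl]⟩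
      · exact ihr.mp ⟨_, weightFn_right hw, fun b hbm => by rw [hQr b hbm, cr]⟩
    · rintro ⟨hEl, hEr, hml, hmr⟩
      obtain ⟨wl, hwl, hbl⟩ := ihl.mpr hml
      obtain ⟨wr, hwr, hbr⟩ := ihr.mpr hmr
      have hen := E_node x l r
      refine ⟨combine ((2 + E r - E l) / 4) ((2 + E l - E r) / 4) wl wr, ?_, ?_⟩
      · intro p hp
        simp only [nodePaths, List.mem_cons, List.mem_append, List.mem_map] at hp
        rcases hp with rfl | ⟨q, hq, rfl⟩ | ⟨q, hq, rfl⟩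
        · refine ⟨?_, ?_, ?_⟩
          · show (0:ℝ) ≤ (2 + E r - E l) / 4
            linarith
          · show (0:ℝ) ≤ (2 + E l - E r) / 4
            linarith
          · show (2 + E r - E l) / 4 + (2 + E l - E r) / 4 = 1
            ring
        · exact hwl q hq
        · exact hwr q hq
      · intro b hbm
        simp only [branches, List.mem_append, List.mem_map] at hbm
        rcases hbm with ⟨b', hb', rfl⟩ | ⟨b', hb', rfl⟩
        · rw [branchWeight_cons]
          have h1 : (fun p e => combine ((2 + E r - E l) / 4) ((2 + E l - E r) / 4) wl wr
              (false :: p) e) = wl := by funext p e; rfl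
          rw [h1, hbl b' hb']
          show (2 + E r - E l) / 4 + E l / 2 = _
          linarith
        · rw [branchWeight_cons]
          have h1 : (fun p e => combine ((2 + E r - E l) / 4) ((2 + E l - E r) / 4) wl wr
              (true :: p) e) = wr := by funext p e; rfl
          rw [h1, hbr b' hb']
          show (2 + E l - E r) / 4 + E r / 2 = _
          linarith

end BTree

/-- A finite full binary tree is quasi-balanced if and only if it is monotone. -/
theorem quasiBalanced_iff_monotone {X : Type} (T : BTree X) :
    BTree.QuasiBalanced T ↔ BTree.IsMonotone T := BTree.main T
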